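/- For |q|<1 and all a: Σ_{n≥0} (a;q)_n q^{n(n+1)/2} / (q;q)_n = (−q;q)_∞ (aq;q²)_∞. -/

import Mathlib

open scoped BigOperators
open Filter Finset Topology

namespace BDaux


noncomputable def Q (q : ℂ) (n : ℕ) : ℂ := ∏ j ∈ Finset.range n, (1 - q ^ (j + 1))

noncomputable def c (q a : ℂ) (n : ℕ) : ℂ :=
  (∏ j ∈ Finset.range n, (1 - a * q ^ j)) * q ^ (n * (n + 1) / 2) / Q q n

noncomputable def e (q z : ℂ) (n : ℕ) : ℂ := z ^ n * q ^ (n * (n + 1) / 2) / Q q n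

noncomputable def u (q a : ℂ) (n : ℕ) : ℂ :=
  a * (∏ j ∈ Finset.range n, (1 - a * q ^ (j + 1))) * q ^ ((n + 1) * (n + 1 + 1) / 2) / Q q n


lemma Tsucc (n : ℕ) : (n + 1) * (n + 1 + 1) / 2 = n * (n + 1) / 2 + (n + 1) := by
  have h : (n + 1) * (n + 1 + 1) = n * (n + 1) + (n + 1) * 2 := by ring
  rw [h, Nat.add_mul_div_right _ _ (by norm_num : (0:ℕ) < 2)]

variable {q : ℂ}

lemma norm_pow_lt (hq : ‖q‖ < 1) (n : ℕ) : ‖q ^ (n + 1)‖ < 1 := by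
  rw [norm_pow]
  calc ‖q‖ ^ (n+1) ≤ ‖q‖ ^ 1 := pow_le_pow_of_le_one (norm_nonneg q) hq.le (by omega)
  _ < 1 := by simpa using hq

lemma one_sub_pow_ne (hq : ‖q‖ < 1) (n : ℕ) : (1 : ℂ) - q ^ (n + 1) ≠ 0 := by
  intro h
  have h1 : q ^ (n+1) = 1 := by linear_combination -h
  have h2 := norm_pow_lt hq n
  rw [h1] at h2
  simp at h2

lemma Q_ne (hq : ‖q‖ < 1) (n : ℕ) : Q q n ≠ 0 :=
  Finset.prod_ne_zero_iff.2 fun j _ => one_sub_pow_ne hq j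

lemma Q_succ (n : ℕ) : Q q (n + 1) = Q q n * (1 - q ^ (n + 1)) := Finset.prod_range_succ _ n

lemma norm_Q_ge (hq : ‖q‖ < 1) (n : ℕ) : (1 - ‖q‖) ^ n ≤ ‖Q q n‖ := by
  rw [Q, norm_prod]
  calc (1 - ‖q‖) ^ n = ∏ j ∈ Finset.range n, (1 - ‖q‖) := by
        rw [Finset.prod_const, Finset.card_range]
    _ ≤ ∏ j ∈ Finset.range n, ‖(1:ℂ) - q ^ (j+1)‖ := by
        apply Finset.prod_le_prod
        · intro j _; linarith [hq]
        · intro j _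
          have h1 : ‖q‖^(j+1) ≤ ‖q‖ := by
            have := pow_le_pow_of_le_one (norm_nonneg q) hq.le (by omega : 1 ≤ j+1)
            simpa using this
          have h2 := norm_sub_norm_le (1:ℂ) (q^(j+1))
          simp only [norm_one, norm_pow] at h2
          linarith

/-- Generic ratio-test summability. -/
lemma summable_ratio (hq : ‖q‖ < 1) {E : Type*} [NormedAddCommGroup E] [CompleteSpace E] {f : ℕ → E} {C : ℝ}
    (h : ∀ n, ‖f (n + 1)‖ ≤ C * ‖q‖ ^ (n + 1) * ‖f n‖) : Summable f := by
  have h0 : Tendsto (fun n : ℕ => C * ‖q‖ ^ (n + 1)) atTop (𝓝 0) := by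
    have := tendsto_pow_atTop_nhds_zero_of_norm_lt_one (x := ‖q‖) (by simpa using hq)
    simpa [Function.comp_def] using (this.const_mul C).comp (tendsto_add_atTop_nat 1)
  apply summable_of_ratio_norm_eventually_le (r := 1/2) (by norm_num)
  filter_upwards [h0.eventually (ge_mem_nhds (by norm_num : (0:ℝ) < 1/2))] with n hn
  calc ‖f (n+1)‖ ≤ C * ‖q‖ ^ (n+1) * ‖f n‖ := h n
    _ ≤ 1/2 * ‖f n‖ := mul_le_mul_of_nonneg_right hn (norm_nonneg _)



lemma pow_T_succ (q : ℂ) (n : ℕ) :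
    q ^ ((n + 1) * (n + 1 + 1) / 2) = q ^ (n * (n + 1) / 2) * q ^ (n + 1) := by
  rw [Tsucc, pow_add]

lemma c_succ (q a : ℂ) (n : ℕ) :
    c q a (n + 1) = c q a n * ((1 - a * q ^ n) * q ^ (n + 1) / (1 - q ^ (n + 1))) := by
  rw [c, c, Finset.prod_range_succ, pow_T_succ, Q_succ]
  field_simp

lemma e_succ (q z : ℂ) (n : ℕ) :
    e q z (n + 1) = e q z n * (z * q ^ (n + 1) / (1 - q ^ (n + 1))) := by
  rw [e, e, pow_T_succ, Q_succ, pow_succ]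
  field_simp

lemma norm_factor_le (hq : ‖q‖ < 1) (x : ℂ) (n : ℕ) (hx : ‖x‖ ≤ 1) (a : ℂ) :
    ‖(1 - a * x) * q ^ (n + 1) / (1 - q ^ (n + 1))‖ ≤ (1 + ‖a‖) / (1 - ‖q‖) * ‖q‖ ^ (n + 1) := by
  rw [norm_div, norm_mul, norm_pow]
  have h1 : ‖(1:ℂ) - a * x‖ ≤ 1 + ‖a‖ := by
    calc ‖(1:ℂ) - a * x‖ ≤ ‖(1:ℂ)‖ + ‖a * x‖ := norm_sub_le _ _
      _ ≤ 1 + ‖a‖ := by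
          rw [norm_one, norm_mul]
          nlinarith [norm_nonneg a, norm_nonneg x]
  have h2 : 1 - ‖q‖ ≤ ‖(1:ℂ) - q ^ (n + 1)‖ := by
    have h3 : ‖q‖^(n+1) ≤ ‖q‖ := by
      have := pow_le_pow_of_le_one (norm_nonneg q) hq.le (by omega : 1 ≤ n+1)
      simpa using this
    have h4 := norm_sub_norm_le (1:ℂ) (q^(n+1))
    simp only [norm_one, norm_pow] at h4
    linarith
  have hqpos : 0 < 1 - ‖q‖ := by linarith
  have hn : (0:ℝ) ≤ ‖q‖ ^ (n+1) := by positivity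
  calc ‖(1:ℂ) - a * x‖ * ‖q‖ ^ (n+1) / ‖(1:ℂ) - q ^ (n+1)‖
      ≤ (1 + ‖a‖) * ‖q‖ ^ (n+1) / (1 - ‖q‖) :=
        div_le_div₀ (by positivity) (mul_le_mul_of_nonneg_right h1 hn) hqpos h2
    _ = (1 + ‖a‖) / (1 - ‖q‖) * ‖q‖ ^ (n+1) := by ring

lemma summable_c (hq : ‖q‖ < 1) (a : ℂ) : Summable (c q a) := by
  apply summable_ratio hq (C := (1 + ‖a‖) / (1 - ‖q‖))
  intro n
  rw [c_succ, norm_mul, mul_comm ((1 + ‖a‖) / (1 - ‖q‖) * ‖q‖ ^ (n+1)) (‖c q a n‖)]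
  apply mul_le_mul_of_nonneg_left _ (norm_nonneg _)
  have := norm_factor_le hq (q ^ n) n (by
    rcases n with _ | m
    · simp
    · exact (norm_pow_lt hq m).le) a
  exact this

lemma summable_e (hq : ‖q‖ < 1) (z : ℂ) : Summable (e q z) := by
  apply summable_ratio hq (C := (1 + ‖z‖) / (1 - ‖q‖))
  intro n
  rw [e_succ, norm_mul, mul_comm ((1 + ‖z‖) / (1 - ‖q‖) * ‖q‖ ^ (n+1)) (‖e q z n‖)]
  apply mul_le_mul_of_nonneg_left _ (norm_nonneg _)
  have h : z * q ^ (n+1) / (1 - q ^ (n+1)) = (1 - (-z) * 1) * q ^ (n + 1) / (1 - q^(n+1)) - q ^ (n+1) / (1 - q ^ (n+1)) := by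
    ring
  -- simpler: direct bound
  rw [norm_div, norm_mul, norm_pow]
  have h2 : 1 - ‖q‖ ≤ ‖(1:ℂ) - q ^ (n + 1)‖ := by
    have h3 : ‖q‖^(n+1) ≤ ‖q‖ := by
      have := pow_le_pow_of_le_one (norm_nonneg q) hq.le (by omega : 1 ≤ n+1)
      simpa using this
    have h4 := norm_sub_norm_le (1:ℂ) (q^(n+1))
    simp only [norm_one, norm_pow] at h4
    linarith
  have hqpos : 0 < 1 - ‖q‖ := by linarith
  have hn : (0:ℝ) ≤ ‖q‖ ^ (n+1) := by positivity
  have hz : ‖z‖ ≤ 1 + ‖z‖ := by linarith [norm_nonneg z]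
  calc ‖z‖ * ‖q‖ ^ (n+1) / ‖(1:ℂ) - q ^ (n+1)‖
      ≤ (1 + ‖z‖) * ‖q‖ ^ (n+1) / (1 - ‖q‖) :=
        div_le_div₀ (by positivity) (mul_le_mul_of_nonneg_right hz hn) hqpos h2
    _ = (1 + ‖z‖) / (1 - ‖q‖) * ‖q‖ ^ (n+1) := by ring

/-- Uniform norm bound for `c` terms. -/
lemma norm_c_le (hq : ‖q‖ < 1) {B : ℝ} {b : ℂ} (hb : ‖b‖ ≤ B) (n : ℕ) :
    ‖c q b n‖ ≤ ((1 + B) / (1 - ‖q‖)) ^ n * ‖q‖ ^ (n * (n + 1) / 2) := by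
  have hqpos : 0 < 1 - ‖q‖ := by linarith
  have hB : 0 ≤ B := le_trans (norm_nonneg b) hb
  rw [c, norm_div, norm_mul, norm_pow, norm_prod]
  have h1 : ∏ j ∈ Finset.range n, ‖(1:ℂ) - b * q ^ j‖ ≤ (1 + B) ^ n := by
    calc ∏ j ∈ Finset.range n, ‖(1:ℂ) - b * q ^ j‖ ≤ ∏ j ∈ Finset.range n, (1 + B) := by
          apply Finset.prod_le_prod (fun j _ => norm_nonneg _)
          intro j _
          calc ‖(1:ℂ) - b * q ^ j‖ ≤ 1 + ‖b * q ^ j‖ := by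
                have := norm_sub_le (1:ℂ) (b * q ^ j)
                simpa using this
            _ ≤ 1 + B := by
                rw [norm_mul, norm_pow]
                have : ‖q‖ ^ j ≤ 1 := pow_le_one₀ (norm_nonneg q) hq.le
                nlinarith [norm_nonneg b]
      _ = (1 + B) ^ n := by rw [Finset.prod_const, Finset.card_range]
  have h2 := norm_Q_ge hq n
  have hQpos : (0:ℝ) < ‖Q q n‖ := lt_of_lt_of_le (by positivity) h2
  rw [div_le_iff₀ hQpos]
  have h3 : (1+B)^n ≤ ((1 + B) / (1 - ‖q‖)) ^ n * ‖Q q n‖ := by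
    calc (1+B)^n = ((1 + B) / (1 - ‖q‖)) ^ n * (1 - ‖q‖)^n := by
          rw [div_pow, div_mul_cancel₀]
          exact (by positivity : (0:ℝ) < (1 - ‖q‖)^n).ne'
      _ ≤ ((1 + B) / (1 - ‖q‖)) ^ n * ‖Q q n‖ :=
          mul_le_mul_of_nonneg_left h2 (by positivity)
  calc (∏ j ∈ Finset.range n, ‖(1:ℂ) - b * q ^ j‖) * ‖q‖ ^ (n * (n + 1) / 2)
      ≤ ((1 + B))^n * ‖q‖ ^ (n * (n + 1) / 2) :=
        mul_le_mul_of_nonneg_right h1 (by positivity)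
    _ ≤ (((1 + B) / (1 - ‖q‖)) ^ n * ‖Q q n‖) * ‖q‖ ^ (n * (n + 1) / 2) :=
        mul_le_mul_of_nonneg_right h3 (by positivity)
    _ = ((1 + B) / (1 - ‖q‖)) ^ n * ‖q‖ ^ (n * (n + 1) / 2) * ‖Q q n‖ := by ring



/-- Telescoping: if `d 0 = u 0`, `d (n+1) = u (n+1) - u n`, `u → 0`, `d` summable,
then `∑' d = 0`. -/
lemma telescope {d v : ℕ → ℂ} (hd : Summable d) (h0 : d 0 = v 0)
    (hs : ∀ n, d (n + 1) = v (n + 1) - v n) (hv : Tendsto v atTop (𝓝 0)) :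
    ∑' n, d n = 0 := by
  have hps : ∀ N, ∑ n ∈ Finset.range (N + 1), d n = v N := by
    intro N
    induction N with
    | zero => simpa using h0
    | succ k ih => rw [Finset.sum_range_succ, ih, hs]; ring
  have h1 : Tendsto (fun N => ∑ n ∈ Finset.range N, d n) atTop (𝓝 (∑' n, d n)) :=
    hd.hasSum.tendsto_sum_nat
  have h2 : Tendsto (fun N => ∑ n ∈ Finset.range (N + 1), d n) atTop (𝓝 (∑' n, d n)) :=
    h1.comp (tendsto_add_atTop_nat 1)
  have h3 : Tendsto v atTop (𝓝 (∑' n, d n)) := by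
    apply h2.congr
    intro N; exact hps N
  exact tendsto_nhds_unique h3 hv

lemma key_c0 (q a : ℂ) : c q a 0 - (1 - a * q) * c q (a * q ^ 2) 0 = u q a 0 := by
  simp [c, u, Q]

lemma key_c (hq : ‖q‖ < 1) (a : ℂ) (n : ℕ) :
    c q a (n + 1) - (1 - a * q) * c q (a * q ^ 2) (n + 1) = u q a (n + 1) - u q a n := by
  have hQ := Q_ne hq n
  have h1 := one_sub_pow_ne hq n
  -- rewrite second product
  have hP2 : (1 - a * q) * ∏ j ∈ Finset.range (n + 1), (1 - a * q ^ 2 * q ^ j)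
      = (∏ j ∈ Finset.range n, (1 - a * q ^ (j + 1)))
        * ((1 - a * q ^ (n + 1)) * (1 - a * q ^ (n + 2))) := by
    have e1 : ∀ j ∈ Finset.range (n+1), (1 - a * q ^ 2 * q ^ j) = 1 - a * q ^ ((j + 1) + 1) := by
      intro j _
      rw [pow_add, pow_add, pow_one]
      ring
    have e2 := Finset.prod_range_succ' (fun j => 1 - a * q ^ (j + 1)) (n + 1)
    have e3 := Finset.prod_range_succ (fun j => 1 - a * q ^ (j + 1)) (n + 1)
    have e4 := Finset.prod_range_succ (fun j => 1 - a * q ^ (j + 1)) n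
    rw [Finset.prod_congr rfl e1]
    calc (1 - a * q) * (∏ j ∈ Finset.range (n+1), (1 - a * q ^ (j + 1 + 1)))
        = (∏ j ∈ Finset.range (n+1), (1 - a * q ^ (j + 1 + 1))) * (1 - a * q ^ (0 + 1)) := by
          rw [mul_comm]; norm_num
      _ = ∏ j ∈ Finset.range (n + 1 + 1), (1 - a * q ^ (j + 1)) := e2.symm
      _ = ((∏ j ∈ Finset.range n, (1 - a * q ^ (j + 1))) * (1 - a * q ^ (n + 1)))
            * (1 - a * q ^ (n + 1 + 1)) := by rw [e3, e4]
      _ = (∏ j ∈ Finset.range n, (1 - a * q ^ (j + 1)))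
            * ((1 - a * q ^ (n + 1)) * (1 - a * q ^ (n + 2))) := by
          rw [show n + 1 + 1 = n + 2 from rfl]; ring
  have hP1 : ∏ j ∈ Finset.range (n + 1), (1 - a * q ^ j)
      = (∏ j ∈ Finset.range n, (1 - a * q ^ (j + 1))) * (1 - a) := by
    have := Finset.prod_range_succ' (fun j => 1 - a * q ^ j) n
    simpa using this
  rw [c, c, u, u, Q_succ]
  conv_lhs => rw [← mul_div_assoc, ← mul_assoc]
  rw [hP2, hP1]
  rw [pow_T_succ q (n+1), pow_T_succ q n,
    Finset.prod_range_succ (fun j => 1 - a * q ^ (j + 1)) n]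
  have hp2 : q ^ (n + 2) = q ^ (n + 1) * q := by rw [pow_succ]
  rw [hp2]
  set X := ∏ j ∈ Finset.range n, (1 - a * q ^ (j + 1)) with hX
  set s := q ^ (n * (n + 1) / 2) with hs
  set p := q ^ (n + 1) with hp
  field_simp
  ring

lemma key_e0 (q z : ℂ) : e q z 0 - (1 + z * q) * e q (z * q) 0 = -(z * q * e q (z * q) 0) := by
  simp [e, Q]

lemma key_e (hq : ‖q‖ < 1) (z : ℂ) (n : ℕ) :
    e q z (n + 1) - (1 + z * q) * e q (z * q) (n + 1)
      = -(z * q * e q (z * q) (n + 1)) - -(z * q * e q (z * q) n) := by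
  have hQ := Q_ne hq n
  have h1 := one_sub_pow_ne hq n
  rw [e, e, e, Q_succ, pow_T_succ q n]
  have hz : (z * q) ^ (n + 1) = z ^ (n+1) * q ^ (n+1) := mul_pow z q (n+1)
  have hz2 : z ^ (n + 1) = z ^ n * z := pow_succ z n
  rw [hz, hz2]
  have hzn : (z * q) ^ n = z ^ n * q ^ n := mul_pow z q n
  rw [hzn]
  have hqn1 : q ^ (n + 1) = q ^ n * q := pow_succ q n
  rw [hqn1] at h1 ⊢
  set X := z ^ n with hX
  set s := q ^ (n * (n + 1) / 2) with hs
  set p := q ^ n with hp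
  have h2 : Q q n * (1 - p * q) ≠ 0 := mul_ne_zero hQ h1
  field_simp [hQ, h1]
  ring



lemma u_succ (q a : ℂ) (n : ℕ) :
    u q a (n + 1) = u q a n * ((1 - a * q ^ (n + 1)) * q ^ (n + 1) / (1 - q ^ (n + 1)) * q) := by
  rw [u, u, Finset.prod_range_succ, pow_T_succ q (n + 1), Q_succ,
    show q ^ (n + 1 + 1) = q ^ (n + 1) * q from pow_succ q (n + 1)]
  field_simp

lemma summable_u (hq : ‖q‖ < 1) (a : ℂ) : Summable (u q a) := by
  have hqpos : (0:ℝ) < 1 - ‖q‖ := by linarith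
  apply summable_ratio hq (C := (1 + ‖a‖) / (1 - ‖q‖))
  intro n
  rw [u_succ, norm_mul, mul_comm ((1 + ‖a‖) / (1 - ‖q‖) * ‖q‖ ^ (n + 1)) (‖u q a n‖)]
  apply mul_le_mul_of_nonneg_left _ (norm_nonneg _)
  rw [norm_mul]
  calc ‖(1 - a * q ^ (n + 1)) * q ^ (n + 1) / (1 - q ^ (n + 1))‖ * ‖q‖
      ≤ ((1 + ‖a‖) / (1 - ‖q‖) * ‖q‖ ^ (n + 1)) * 1 := by
        apply mul_le_mul (norm_factor_le hq (q ^ (n + 1)) n (norm_pow_lt hq n).le a) hq.le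
          (norm_nonneg q)
        exact mul_nonneg (div_nonneg (by positivity) hqpos.le) (by positivity)
    _ = (1 + ‖a‖) / (1 - ‖q‖) * ‖q‖ ^ (n + 1) := mul_one _

lemma step_c (hq : ‖q‖ < 1) (a : ℂ) :
    ∑' n, c q a n = (1 - a * q) * ∑' n, c q (a * q ^ 2) n := by
  have hs1 := summable_c hq a
  have hs2 := (summable_c hq (a * q ^ 2)).mul_left (1 - a * q)
  have hd : Summable (fun n => c q a n - (1 - a * q) * c q (a * q ^ 2) n) := hs1.sub hs2
  have ht := telescope hd (key_c0 q a) (key_c hq a) (summable_u hq a).tendsto_atTop_zero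
  rw [Summable.tsum_sub hs1 hs2, tsum_mul_left] at ht
  linear_combination ht

lemma step_e (hq : ‖q‖ < 1) (z : ℂ) :
    ∑' n, e q z n = (1 + z * q) * ∑' n, e q (z * q) n := by
  have hs1 := summable_e hq z
  have hs2 := (summable_e hq (z * q)).mul_left (1 + z * q)
  have hd : Summable (fun n => e q z n - (1 + z * q) * e q (z * q) n) := hs1.sub hs2
  have hv : Tendsto (fun n => -(z * q * e q (z * q) n)) atTop (𝓝 0) := by
    have := ((summable_e hq (z * q)).tendsto_atTop_zero).const_mul (z * q)
    simpa using this.neg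
  have ht := telescope hd (key_e0 q z) (key_e hq z) hv
  rw [Summable.tsum_sub hs1 hs2, tsum_mul_left] at ht
  linear_combination ht

lemma iter_c (hq : ‖q‖ < 1) (a : ℂ) (N : ℕ) :
    ∑' n, c q a n
      = (∏ j ∈ Finset.range N, (1 - a * q * (q ^ 2) ^ j)) * ∑' n, c q (a * (q ^ 2) ^ N) n := by
  induction N with
  | zero => simp
  | succ k ih =>
    rw [ih, Finset.prod_range_succ, step_c hq (a * (q ^ 2) ^ k),
      show a * (q ^ 2) ^ k * q ^ 2 = a * (q ^ 2) ^ (k + 1) from by rw [pow_succ]; ring]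
    ring

lemma iter_e (hq : ‖q‖ < 1) (N : ℕ) :
    ∑' n, e q 1 n = (∏ j ∈ Finset.range N, (1 + q ^ (j + 1))) * ∑' n, e q (q ^ N) n := by
  induction N with
  | zero => simp
  | succ k ih =>
    rw [ih, Finset.prod_range_succ, step_e hq (q ^ k),
      show q ^ k * q = q ^ (k + 1) from (pow_succ q k).symm]
    ring

lemma summable_bound (hq : ‖q‖ < 1) {C : ℝ} (hC : 0 ≤ C) :
    Summable (fun n => C ^ n * ‖q‖ ^ (n * (n + 1) / 2)) := by
  apply summable_ratio hq (C := C)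
  intro n
  have h1 : (0:ℝ) ≤ C ^ n * ‖q‖ ^ (n * (n + 1) / 2) := by positivity
  have h2 : (0:ℝ) ≤ C ^ (n+1) * ‖q‖ ^ ((n+1) * (n + 1 + 1) / 2) := by positivity
  rw [Real.norm_of_nonneg h2, Real.norm_of_nonneg h1]
  have : ‖q‖ ^ ((n+1) * (n + 1 + 1) / 2) = ‖q‖ ^ (n * (n + 1) / 2) * ‖q‖ ^ (n + 1) := by
    rw [← pow_add]
    congr 1
    have h : (n + 1) * (n + 1 + 1) = n * (n + 1) + (n + 1) * 2 := by ring
    rw [h, Nat.add_mul_div_right _ _ (by norm_num : (0:ℕ) < 2)]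
  rw [this, pow_succ]
  ring_nf
  exact le_of_eq (by ring)

lemma lim_c (hq : ‖q‖ < 1) (a : ℂ) :
    Tendsto (fun N => ∑' n, c q (a * (q ^ 2) ^ N) n) atTop (𝓝 (∑' n, c q 0 n)) := by
  have hq2 : ‖q ^ 2‖ < 1 := by
    rw [norm_pow]
    exact pow_lt_one₀ (norm_nonneg q) hq (by norm_num)
  apply tendsto_tsum_of_dominated_convergence
    (bound := fun n => ((1 + ‖a‖) / (1 - ‖q‖)) ^ n * ‖q‖ ^ (n * (n + 1) / 2))
  · exact summable_bound hq (div_nonneg (by positivity) (by linarith : (0:ℝ) ≤ 1 - ‖q‖))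
  · intro k
    have hcont : Continuous (fun b : ℂ => c q b k) := by
      unfold c
      fun_prop
    have htend : Tendsto (fun N => a * (q ^ 2) ^ N) atTop (𝓝 0) := by
      have := (tendsto_pow_atTop_nhds_zero_of_norm_lt_one hq2).const_mul a
      simpa using this
    simpa [Function.comp_def] using (hcont.tendsto 0).comp htend
  · filter_upwards with N k
    apply norm_c_le hq
    rw [norm_mul, norm_pow]
    calc ‖a‖ * ‖q ^ 2‖ ^ N ≤ ‖a‖ * 1 :=
          mul_le_mul_of_nonneg_left (pow_le_one₀ (norm_nonneg _) hq2.le) (norm_nonneg a)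
      _ = ‖a‖ := mul_one _

lemma norm_e_le (hq : ‖q‖ < 1) {b : ℂ} (hb : ‖b‖ ≤ 1) (n : ℕ) :
    ‖e q b n‖ ≤ (1 / (1 - ‖q‖)) ^ n * ‖q‖ ^ (n * (n + 1) / 2) := by
  have hqpos : 0 < 1 - ‖q‖ := by linarith
  rw [e, norm_div, norm_mul, norm_pow, norm_pow]
  have h2 := norm_Q_ge hq n
  have hQpos : (0:ℝ) < ‖Q q n‖ := lt_of_lt_of_le (by positivity) h2
  rw [div_le_iff₀ hQpos]
  have h3 : (1:ℝ) ≤ (1 / (1 - ‖q‖)) ^ n * ‖Q q n‖ := by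
    calc (1:ℝ) = (1 / (1 - ‖q‖)) ^ n * (1 - ‖q‖) ^ n := by
          rw [div_pow, one_pow, div_mul_cancel₀]
          exact (by positivity : (0:ℝ) < (1 - ‖q‖) ^ n).ne'
      _ ≤ (1 / (1 - ‖q‖)) ^ n * ‖Q q n‖ := mul_le_mul_of_nonneg_left h2 (by positivity)
  calc ‖b‖ ^ n * ‖q‖ ^ (n * (n + 1) / 2) ≤ 1 * ‖q‖ ^ (n * (n + 1) / 2) :=
        mul_le_mul_of_nonneg_right (pow_le_one₀ (norm_nonneg b) hb) (by positivity)
    _ = ‖q‖ ^ (n * (n + 1) / 2) := one_mul _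
    _ ≤ ((1 / (1 - ‖q‖)) ^ n * ‖Q q n‖) * ‖q‖ ^ (n * (n + 1) / 2) := by
        nlinarith [pow_nonneg (norm_nonneg q) (n * (n + 1) / 2)]
    _ = (1 / (1 - ‖q‖)) ^ n * ‖q‖ ^ (n * (n + 1) / 2) * ‖Q q n‖ := by ring

lemma lim_e (hq : ‖q‖ < 1) :
    Tendsto (fun N => ∑' n, e q (q ^ N) n) atTop (𝓝 1) := by
  have h0 : (∑' n, e q 0 n) = 1 := by
    rw [tsum_eq_single 0]
    · simp [e, Q]
    · intro n hn
      rcases n with _ | m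
      · exact absurd rfl hn
      · simp [e]
  rw [← h0]
  apply tendsto_tsum_of_dominated_convergence
    (bound := fun n => (1 / (1 - ‖q‖)) ^ n * ‖q‖ ^ (n * (n + 1) / 2))
  · exact summable_bound hq (div_nonneg (by norm_num) (by linarith : (0:ℝ) ≤ 1 - ‖q‖))
  · intro k
    have hcont : Continuous (fun b : ℂ => e q b k) := by
      unfold e
      fun_prop
    have htend : Tendsto (fun N : ℕ => q ^ N) atTop (𝓝 0) :=
      tendsto_pow_atTop_nhds_zero_of_norm_lt_one hq
    simpa [Function.comp_def] using (hcont.tendsto 0).comp htend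
  · filter_upwards with N k
    apply norm_e_le hq
    rw [norm_pow]
    exact pow_le_one₀ (norm_nonneg q) hq.le



/-- Partial products of `1 + x y^j` converge to the infinite product. -/
lemma tendsto_prod (f : ℕ → ℂ) (x y : ℂ) (hy : ‖y‖ < 1) (hf : ∀ j, f j = 1 + x * y ^ j) :
    Tendsto (fun N => ∏ j ∈ Finset.range N, f j) atTop (𝓝 (∏' j, f j)) := by
  by_cases hzero : ∀ j, f j ≠ 0
  · -- nonvanishing case: use logs
    have hlog : Summable (fun j => Complex.log (f j)) := by
      have htend : Tendsto (fun j : ℕ => ‖x * y ^ j‖) atTop (𝓝 0) := by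
        have := (tendsto_pow_atTop_nhds_zero_of_norm_lt_one hy).const_mul x
        simpa using this.norm
      obtain ⟨N₀, hN₀⟩ : ∃ N₀, ∀ j ≥ N₀, ‖x * y ^ j‖ ≤ 1 / 2 := by
        have := htend.eventually (ge_mem_nhds (by norm_num : (0:ℝ) < 1/2))
        exact eventually_atTop.1 this
      rw [← summable_nat_add_iff N₀]
      apply Summable.of_norm_bounded (g := fun j => 3 / 2 * (‖x‖ * ‖y‖ ^ N₀) * ‖y‖ ^ j)
      · exact (summable_geometric_of_lt_one (norm_nonneg y) hy).mul_left _
      · intro j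
        rw [hf (j + N₀)]
        calc ‖Complex.log (1 + x * y ^ (j + N₀))‖ ≤ 3 / 2 * ‖x * y ^ (j + N₀)‖ :=
              Complex.norm_log_one_add_half_le_self (hN₀ (j + N₀) (by omega))
          _ = 3 / 2 * (‖x‖ * ‖y‖ ^ N₀) * ‖y‖ ^ j := by
              rw [norm_mul, norm_pow, pow_add]
              ring
    have hm : Multipliable f :=
      Complex.multipliable_of_summable_log hlog
    exact hm.hasProd.tendsto_prod_nat
  · push_neg at hzero
    obtain ⟨j0, hj0⟩ := hzero
    have h0 : HasProd f 0 := by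
      rw [HasProd]
      apply Tendsto.congr' _ tendsto_const_nhds
      rw [Filter.EventuallyEq, SummationFilter.unconditional_filter, eventually_atTop]
      exact ⟨{j0}, fun s hs => (Finset.prod_eq_zero (hs (Finset.mem_singleton_self j0)) hj0).symm⟩
    rw [h0.tprod_eq]
    apply Tendsto.congr' _ tendsto_const_nhds
    rw [Filter.EventuallyEq, eventually_atTop]
    exact ⟨j0 + 1, fun N hN =>
      (Finset.prod_eq_zero (Finset.mem_range.2 (by omega)) hj0).symm⟩

end BDaux

open BDaux

/-- `Σ_{n≥0} (a;q)_n q^{n(n+1)/2} / (q;q)_n = (−q;q)_∞ (aq;q²)_∞`. -/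
theorem bailey_daum (a q : ℂ) (hq : ‖q‖ < 1) :
    (∑' n : ℕ, (∏ j ∈ Finset.range n, (1 - a * q ^ j)) * q ^ (n * (n + 1) / 2) /
        ∏ j ∈ Finset.range n, (1 - q ^ (j + 1))) =
      (∏' j : ℕ, (1 + q ^ (j + 1))) * ∏' j : ℕ, (1 - a * q * (q ^ 2) ^ j) := by
  have hq2 : ‖q ^ 2‖ < 1 := by
    rw [norm_pow]
    exact pow_lt_one₀ (norm_nonneg q) hq (by norm_num)
  -- Euler's identity: `∑' e q 1 = ∏' (1 + q^(j+1))`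
  have euler : ∑' n, e q 1 n = ∏' j : ℕ, (1 + q ^ (j + 1)) := by
    have h1 : Tendsto
        (fun N => (∏ j ∈ Finset.range N, (1 + q ^ (j + 1))) * ∑' n, e q (q ^ N) n) atTop
        (𝓝 ((∏' j : ℕ, (1 + q ^ (j + 1))) * 1)) :=
      (tendsto_prod (fun j => 1 + q ^ (j + 1)) q q hq
        (fun j => by rw [pow_succ]; ring)).mul (lim_e hq)
    have h3 : Tendsto
        (fun N => (∏ j ∈ Finset.range N, (1 + q ^ (j + 1))) * ∑' n, e q (q ^ N) n) atTop
        (𝓝 (∑' n, e q 1 n)) :=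
      Tendsto.congr (fun N => iter_e hq N) tendsto_const_nhds
    have := tendsto_nhds_unique h3 h1
    rw [this, mul_one]
  have hc0 : ∑' n, c q 0 n = ∑' n, e q 1 n := by
    apply tsum_congr
    intro n
    simp [c, e]
  have main : ∑' n, c q a n
      = (∏' j : ℕ, (1 - a * q * (q ^ 2) ^ j)) * ∑' n, c q 0 n := by
    have h1 : Tendsto
        (fun N => (∏ j ∈ Finset.range N, (1 - a * q * (q ^ 2) ^ j))
          * ∑' n, c q (a * (q ^ 2) ^ N) n) atTop
        (𝓝 ((∏' j : ℕ, (1 - a * q * (q ^ 2) ^ j)) * ∑' n, c q 0 n)) :=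
      (tendsto_prod (fun j => 1 - a * q * (q ^ 2) ^ j) (-(a * q)) (q ^ 2) hq2
        (fun j => by ring)).mul (lim_c hq a)
    have h3 : Tendsto
        (fun N => (∏ j ∈ Finset.range N, (1 - a * q * (q ^ 2) ^ j))
          * ∑' n, c q (a * (q ^ 2) ^ N) n) atTop
        (𝓝 (∑' n, c q a n)) :=
      Tendsto.congr (fun N => iter_c hq a N) tendsto_const_nhds
    exact tendsto_nhds_unique h3 h1
  have lhs_eq : (∑' n : ℕ, (∏ j ∈ Finset.range n, (1 - a * q ^ j)) * q ^ (n * (n + 1) / 2) /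
      ∏ j ∈ Finset.range n, (1 - q ^ (j + 1))) = ∑' n, c q a n := by
    apply tsum_congr
    intro n
    rw [c, Q]
  rw [lhs_eq, main, hc0, euler]
  ring
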